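/- Let ρ* be any probability measure on ℝ^d, let h > 0, and let ρ*_h be the density of ρ* * N(0, h I_d) with score s*_h = ∇ log ρ*_h. Then for every x ∈ ℝ^d, ‖s*_h(x)‖² ≤ (2/h) log( 1 / ((2πh)^{d/2} ρ*_h(x)) ). -/

import Mathlib

set_option maxHeartbeats 1000000
set_option synthInstance.maxHeartbeats 200000


open MeasureTheory Real
open scoped RealInnerProductSpace ENNReal

noncomputable section

abbrev Vec (d : ℕ) := EuclideanSpace ℝ (Fin d)

/-- Density at `x` of the Gaussian `N(c, h I_d)` on `ℝ^d`. -/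
def gaussD (d : ℕ) (h : ℝ) (c x : Vec d) : ℝ :=
  (2 * π * h) ^ (-(d : ℝ) / 2) * Real.exp (-‖x - c‖ ^ 2 / (2 * h))

/-- Density of `μ * N(0, h I_d)` for a measure `μ`. -/
def convD (d : ℕ) (μ : Measure (Vec d)) (h : ℝ) (x : Vec d) : ℝ :=
  ∫ u, gaussD d h u x ∂μ

/-- Density of `p * N(0, h I_d)` for a density function `p`. -/
def densConvD (d : ℕ) (p : Vec d → ℝ) (h : ℝ) (y : Vec d) : ℝ :=
  ∫ z, p (y - z) * gaussD d h 0 z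

/-- Density of the Gaussian mixture `(1/n) ∑ᵢ N(Xᵢ, h I_d)`. -/
def mixD (d n : ℕ) (X : Fin n → Vec d) (h : ℝ) (x : Vec d) : ℝ :=
  (n : ℝ)⁻¹ * ∑ i, gaussD d h (X i) x

/-- Score function `∇ log f`. -/
def scoreFn (d : ℕ) (f : Vec d → ℝ) (x : Vec d) : Vec d :=
  gradient (fun y => Real.log (f y)) x

/-- Regularized score `∇f / max(f, ε)`. -/
def regScore (d : ℕ) (f : Vec d → ℝ) (ε : ℝ) (x : Vec d) : Vec d :=
  (max (f x) ε)⁻¹ • gradient f x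

/-- Score matching loss `∫ ‖s₁ - s₂‖² f`. -/
def scoreLoss (d : ℕ) (s₁ s₂ : Vec d → Vec d) (f : Vec d → ℝ) : ℝ :=
  ∫ x, ‖s₁ x - s₂ x‖ ^ 2 * f x

/-- Squared Hellinger distance between densities. -/
def hellSq (d : ℕ) (p q : Vec d → ℝ) : ℝ :=
  ∫ x, (Real.sqrt (p x) - Real.sqrt (q x)) ^ 2

/-- Mean vector of a measure. -/
def meanVec (d : ℕ) (μ : Measure (Vec d)) : Vec d :=
  ∫ y, y ∂μ

/-- `μ` is `α`-subgaussian: `E[exp⟨θ, X - E X⟩] ≤ exp(α²‖θ‖²/2)` for all `θ`. -/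
def IsSubgaussianMeasure (d : ℕ) (μ : Measure (Vec d)) (α : ℝ) : Prop :=
  ∀ θ : Vec d, ∫ x, Real.exp ⟪θ, x - meanVec d μ⟫ ∂μ ≤ Real.exp (α ^ 2 * ‖θ‖ ^ 2 / 2)

/-- Quadratic form of the Hessian of `g` at `x` applied to `v`. -/
def hessQ (d : ℕ) (g : Vec d → ℝ) (x v : Vec d) : ℝ :=
  iteratedFDeriv ℝ 2 g x ![v, v]


variable {d : ℕ} {h : ℝ}

lemma gaussD_pos (hh : 0 < h) (c x : Vec d) : 0 < gaussD d h c x :=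
  mul_pos (rpow_pos_of_pos (by positivity) _) (exp_pos _)

lemma gaussD_le (hh : 0 < h) (c x : Vec d) :
    gaussD d h c x ≤ (2 * π * h) ^ (-(d : ℝ) / 2) := by
  have h1 : Real.exp (-‖x - c‖ ^ 2 / (2 * h)) ≤ 1 := by
    rw [Real.exp_le_one_iff]
    have : (0:ℝ) ≤ ‖x - c‖ ^ 2 := by positivity
    have h2 : (0:ℝ) < 2 * h := by linarith
    rw [div_nonpos_iff]
    right; constructor <;> [linarith; linarith]
  calc gaussD d h c x ≤ (2 * π * h) ^ (-(d : ℝ) / 2) * 1 :=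
        mul_le_mul_of_nonneg_left h1 (rpow_pos_of_pos (by positivity) _).le
    _ = _ := mul_one _

lemma norm_smul_gaussD_le (hh : 0 < h) (c x : Vec d) :
    ‖x - c‖ * gaussD d h c x ≤ Real.sqrt h * (2 * π * h) ^ (-(d : ℝ) / 2) := by
  set r := ‖x - c‖ with hr
  have hr0 : 0 ≤ r := norm_nonneg _
  have key : r * Real.exp (-r ^ 2 / (2 * h)) ≤ Real.sqrt h := by
    have hsh : 0 < Real.sqrt h := Real.sqrt_pos.2 hh
    have h1 : 1 + r ^ 2 / (2 * h) ≤ Real.exp (r ^ 2 / (2 * h)) := by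
      have := Real.add_one_le_exp (r ^ 2 / (2 * h)); linarith
    have h2 : r ≤ Real.sqrt h * (1 + r ^ 2 / (2 * h)) := by
      have hs2 : Real.sqrt h ^ 2 = h := Real.sq_sqrt hh.le
      rw [← sub_nonneg]
      have e1 : Real.sqrt h * (1 + r ^ 2 / (2 * h)) - r
          = (Real.sqrt h * r ^ 2 - 2 * h * r + 2 * h * Real.sqrt h) / (2 * h) := by
        field_simp; ring
      rw [e1]
      apply div_nonneg _ (by linarith)
      nlinarith [mul_nonneg hsh.le (sq_nonneg (r - Real.sqrt h)), hs2,
        mul_pos hh hsh]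
    have h3 : r ≤ Real.sqrt h * Real.exp (r ^ 2 / (2 * h)) :=
      h2.trans (mul_le_mul_of_nonneg_left h1 (Real.sqrt_nonneg h))
    calc r * Real.exp (-r ^ 2 / (2 * h))
        ≤ (Real.sqrt h * Real.exp (r ^ 2 / (2 * h))) * Real.exp (-r ^ 2 / (2 * h)) :=
          mul_le_mul_of_nonneg_right h3 (exp_pos _).le
      _ = Real.sqrt h := by
          rw [mul_assoc, ← Real.exp_add]
          rw [show r ^ 2 / (2 * h) + -r ^ 2 / (2 * h) = 0 by ring, Real.exp_zero, mul_one]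
  calc r * gaussD d h c x
      = (r * Real.exp (-r ^ 2 / (2 * h))) * (2 * π * h) ^ (-(d : ℝ) / 2) := by
        unfold gaussD; ring
    _ ≤ Real.sqrt h * (2 * π * h) ^ (-(d : ℝ) / 2) := by
        apply mul_le_mul_of_nonneg_right key (rpow_pos_of_pos (by positivity) _).le

lemma gaussD_shift (hh : 0 < h) (u x v : Vec d) :
    gaussD d h u (x + h • v)
      = gaussD d h u x * Real.exp (⟪u - x, v⟫ - h * ‖v‖ ^ 2 / 2) := by
  have hexp : ‖x + h • v - u‖ ^ 2 = ‖x - u‖ ^ 2 + 2 * (h * ⟪x - u, v⟫) + h ^ 2 * ‖v‖ ^ 2 := by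
    have : x + h • v - u = (x - u) + h • v := by abel
    rw [this, norm_add_sq_real, real_inner_smul_right, norm_smul]
    simp [abs_of_pos hh, mul_pow]
  have hinner : ⟪u - x, v⟫ = -⟪x - u, v⟫ := by
    rw [show u - x = -(x - u) by abel, inner_neg_left]
  have heq : -‖x + h • v - u‖ ^ 2 / (2 * h)
      = -‖x - u‖ ^ 2 / (2 * h) + (⟪u - x, v⟫ - h * ‖v‖ ^ 2 / 2) := by
    rw [hexp, hinner]
    field_simp
    ring
  unfold gaussD
  rw [heq, Real.exp_add]
  ring

lemma gaussD_continuous_u (x : Vec d) : Continuous (fun u : Vec d => gaussD d h u x) := by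
  unfold gaussD; fun_prop

lemma my_integrable_of_bound {E : Type*} [NormedAddCommGroup E] {μ : Measure (Vec d)}
    [IsFiniteMeasure μ] {f : Vec d → E} (hc : Continuous f) (C : ℝ) (hb : ∀ u, ‖f u‖ ≤ C) :
    Integrable f μ :=
  (integrable_const C).mono' hc.aestronglyMeasurable (Filter.Eventually.of_forall hb)

lemma gaussD_hasFDerivAt (hh : 0 < h) (u x : Vec d) :
    HasFDerivAt (fun y => gaussD d h u y) ((gaussD d h u x / h) • innerSL ℝ (u - x)) x := by
  have h1 : HasFDerivAt (fun y : Vec d => y - u) (ContinuousLinearMap.id ℝ (Vec d)) x :=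
    (hasFDerivAt_id x).sub_const u
  have h2 := (h1.inner ℝ h1).const_mul (-(2 * h)⁻¹)
  have h3 := h2.exp.const_mul ((2 * π * h) ^ (-(d : ℝ) / 2))
  have hfun : (fun y : Vec d => (2 * π * h) ^ (-(d : ℝ) / 2)
      * Real.exp (-(2 * h)⁻¹ * ⟪y - u, y - u⟫)) = fun y => gaussD d h u y := by
    funext y
    rw [real_inner_self_eq_norm_sq]
    unfold gaussD
    congr 1
    rw [neg_div, div_eq_inv_mul, neg_mul]
  rw [hfun] at h3
  have hCLM : ((gaussD d h u x / h) • innerSL ℝ (u - x) : Vec d →L[ℝ] ℝ)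
      = (2 * π * h) ^ (-(d : ℝ) / 2) • Real.exp (-(2 * h)⁻¹ * ⟪x - u, x - u⟫) •
        (-(2 * h)⁻¹) • ((fderivInnerCLM ℝ (x - u, x - u)).comp
          ((ContinuousLinearMap.id ℝ (Vec d)).prod (ContinuousLinearMap.id ℝ (Vec d)))) := by
    ext v
    have hcomm : ⟪v, x - u⟫ = ⟪x - u, v⟫ := real_inner_comm _ _
    have hinner : ⟪u - x, v⟫ = -⟪x - u, v⟫ := by
      rw [show u - x = -(x - u) by abel, inner_neg_left]
    simp only [ContinuousLinearMap.coe_smul', Pi.smul_apply, innerSL_apply_apply,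
      ContinuousLinearMap.smul_apply, ContinuousLinearMap.coe_comp', Function.comp_apply,
      ContinuousLinearMap.neg_apply, ContinuousLinearMap.prod_apply,
      ContinuousLinearMap.coe_id', id_eq, fderivInnerCLM_apply, smul_eq_mul,
      hcomm, hinner, real_inner_self_eq_norm_sq]
    generalize ⟪x - u, v⟫ = t
    unfold gaussD
    field_simp
    ring
  rw [hCLM]
  exact h3


section ConvLemmas

variable {d : ℕ} {h : ℝ} {μ : Measure (Vec d)}

lemma convD_integrable [IsFiniteMeasure μ] (hh : 0 < h) (x : Vec d) :
    Integrable (fun u => gaussD d h u x) μ :=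
  my_integrable_of_bound (gaussD_continuous_u x) ((2 * π * h) ^ (-(d : ℝ) / 2)) fun u => by
    rw [Real.norm_eq_abs, abs_of_pos (gaussD_pos hh u x)]
    exact gaussD_le hh u x

lemma convD_pos [IsProbabilityMeasure μ] (hh : 0 < h) (x : Vec d) :
    0 < convD d μ h x := by
  rw [convD, MeasureTheory.integral_pos_iff_support_of_nonneg
    (fun u => (gaussD_pos hh u x).le) (convD_integrable hh x)]
  have hsupp : Function.support (fun u : Vec d => gaussD d h u x) = Set.univ :=
    Set.eq_univ_of_forall fun u => (gaussD_pos hh u x).ne'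
  rw [hsupp]
  simp

lemma convD_le [IsProbabilityMeasure μ] (hh : 0 < h) (x : Vec d) :
    convD d μ h x ≤ (2 * π * h) ^ (-(d : ℝ) / 2) := by
  rw [convD]
  calc ∫ u, gaussD d h u x ∂μ ≤ ∫ _u, (2 * π * h) ^ (-(d : ℝ) / 2) ∂μ :=
        integral_mono (convD_integrable hh x) (integrable_const _) fun u => gaussD_le hh u x
    _ = (2 * π * h) ^ (-(d : ℝ) / 2) := by simp

lemma vecInt_integrable [IsFiniteMeasure μ] (hh : 0 < h) (x : Vec d) :
    Integrable (fun u => (gaussD d h u x / h) • (u - x)) μ := by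
  apply my_integrable_of_bound (E := Vec d)
    (C := Real.sqrt h * (2 * π * h) ^ (-(d : ℝ) / 2) / h)
  · have : Continuous (fun u : Vec d => gaussD d h u x / h) :=
      (gaussD_continuous_u x).div_const h
    exact this.smul (continuous_id.sub continuous_const)
  · intro u
    rw [norm_smul, Real.norm_eq_abs, abs_of_pos (div_pos (gaussD_pos hh u x) hh)]
    rw [div_mul_eq_mul_div, div_le_div_iff₀ hh hh, mul_comm (gaussD d h u x) ‖u - x‖]
    have h1 : ‖u - x‖ * gaussD d h u x ≤ Real.sqrt h * (2 * π * h) ^ (-(d : ℝ) / 2) := by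
      rw [norm_sub_rev]
      exact norm_smul_gaussD_le hh u x
    nlinarith [gaussD_pos hh u x, norm_nonneg (u - x), hh]

lemma clmInt_integrable [IsFiniteMeasure μ] (hh : 0 < h) (x : Vec d) :
    Integrable (fun u => (gaussD d h u x / h) • innerSL ℝ (u - x)) μ := by
  apply my_integrable_of_bound (C := Real.sqrt h * (2 * π * h) ^ (-(d : ℝ) / 2) / h)
  · have hc1 : Continuous (fun u : Vec d => gaussD d h u x / h) :=
      (gaussD_continuous_u x).div_const h
    exact hc1.smul ((innerSL ℝ).continuous.comp (continuous_id.sub continuous_const))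
  · intro u
    rw [norm_smul (gaussD d h u x / h) (innerSL ℝ (u - x)), Real.norm_eq_abs,
      abs_of_pos (div_pos (gaussD_pos hh u x) hh), innerSL_apply_norm]
    rw [div_mul_eq_mul_div, div_le_div_iff₀ hh hh, mul_comm (gaussD d h u x) ‖u - x‖]
    have h1 : ‖u - x‖ * gaussD d h u x ≤ Real.sqrt h * (2 * π * h) ^ (-(d : ℝ) / 2) := by
      rw [norm_sub_rev]
      exact norm_smul_gaussD_le hh u x
    nlinarith [gaussD_pos hh u x, norm_nonneg (u - x), hh]

lemma convD_hasFDerivAt [IsProbabilityMeasure μ] (hh : 0 < h) (x : Vec d) :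
    HasFDerivAt (convD d μ h)
      (innerSL ℝ (∫ u, (gaussD d h u x / h) • (u - x) ∂μ)) x := by
  set C1 := Real.sqrt h * (2 * π * h) ^ (-(d : ℝ) / 2) / h with hC1
  have key := hasFDerivAt_integral_of_dominated_of_fderiv_le (𝕜 := ℝ) (μ := μ)
    (F := fun y u => gaussD d h u y)
    (F' := fun y u => (gaussD d h u y / h) • innerSL ℝ (u - y))
    (x₀ := x) (bound := fun _ => C1) (s := Metric.ball x 1) (Metric.ball_mem_nhds x one_pos)
    (Filter.Eventually.of_forall fun y => (gaussD_continuous_u y).aestronglyMeasurable)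
    (convD_integrable hh x)
    (clmInt_integrable hh x).aestronglyMeasurable
    (Filter.Eventually.of_forall fun u y _hy => by
      show ‖(gaussD d h u y / h) • innerSL ℝ (u - y)‖ ≤ C1
      rw [norm_smul (gaussD d h u y / h) (innerSL ℝ (u - y)), Real.norm_eq_abs,
        abs_of_pos (div_pos (gaussD_pos hh u y) hh), innerSL_apply_norm, hC1]
      rw [div_mul_eq_mul_div, div_le_div_iff₀ hh hh, mul_comm (gaussD d h u y) ‖u - y‖]
      have h1 : ‖u - y‖ * gaussD d h u y ≤ Real.sqrt h * (2 * π * h) ^ (-(d : ℝ) / 2) := by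
        rw [norm_sub_rev]
        exact norm_smul_gaussD_le hh u y
      nlinarith [gaussD_pos hh u y, norm_nonneg (u - y), hh])
    (integrable_const C1)
    (Filter.Eventually.of_forall fun u y _hy => gaussD_hasFDerivAt hh u y)
  have heq : (∫ u, (gaussD d h u x / h) • innerSL ℝ (u - x) ∂μ)
      = innerSL ℝ (∫ u, (gaussD d h u x / h) • (u - x) ∂μ) := by
    ext v
    rw [ContinuousLinearMap.integral_apply (clmInt_integrable hh x)]
    simp only [ContinuousLinearMap.smul_apply, innerSL_apply_apply, smul_eq_mul]
    calc ∫ u, gaussD d h u x / h * ⟪u - x, v⟫ ∂μ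
        = ∫ u, ⟪v, (gaussD d h u x / h) • (u - x)⟫ ∂μ := by
          congr 1
          funext u
          rw [real_inner_smul_right, real_inner_comm]
      _ = ⟪v, ∫ u, (gaussD d h u x / h) • (u - x) ∂μ⟫ :=
          integral_inner (vecInt_integrable hh x) v
      _ = _ := real_inner_comm _ _
  rw [← heq]
  exact key

lemma score_eq [IsProbabilityMeasure μ] (hh : 0 < h) (x : Vec d) :
    scoreFn d (convD d μ h) x
      = (convD d μ h x)⁻¹ • ∫ u, (gaussD d h u x / h) • (u - x) ∂μ := by
  set w := ∫ u, (gaussD d h u x / h) • (u - x) ∂μ with hw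
  have hlog := (convD_hasFDerivAt (μ := μ) hh x).log (convD_pos (μ := μ) hh x).ne'
  have hgrad : HasGradientAt (fun y => Real.log (convD d μ h y))
      ((convD d μ h x)⁻¹ • w) x := by
    rw [hasGradientAt_iff_hasFDerivAt]
    have hdual : (InnerProductSpace.toDual ℝ (Vec d)) ((convD d μ h x)⁻¹ • w)
        = (convD d μ h x)⁻¹ • innerSL ℝ w := by
      ext v
      simp only [InnerProductSpace.toDual_apply_apply, ContinuousLinearMap.smul_apply,
        innerSL_apply_apply, smul_eq_mul]
      rw [real_inner_smul_left]
    rw [hdual]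
    exact hlog
  exact hgrad.gradient

end ConvLemmas

/-- Pointwise bound on the score of a Gaussian-smoothed distribution:
`‖s*_h(x)‖² ≤ (2/h) log(1/((2πh)^{d/2} ρ*_h(x)))`. -/
theorem smoothed_score_bound (d : ℕ) (μ : Measure (Vec d)) (h : ℝ)
    (hprob : IsProbabilityMeasure μ) (hh : 0 < h) :
    ∀ x : Vec d,
      ‖scoreFn d (convD d μ h) x‖ ^ 2
        ≤ (2 / h) * Real.log (1 / ((2 * π * h) ^ ((d : ℝ) / 2) * convD d μ h x)) := by
  intro x
  have hρpos := convD_pos (μ := μ) hh x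
  set ρ := convD d μ h x with hρdef
  set s := scoreFn d (convD d μ h) x with hsdef
  set w := ∫ u, (gaussD d h u x / h) • (u - x) ∂μ with hwdef
  have hs : s = ρ⁻¹ • w := score_eq hh x
  have hws : w = ρ • s := by
    rw [hs, smul_smul, mul_inv_cancel₀ hρpos.ne', one_smul]
  have hg_int : Integrable (fun u => gaussD d h u x) μ := convD_integrable hh x
  have hvec_int : Integrable (fun u => (gaussD d h u x / h) • (u - x)) μ :=
    vecInt_integrable hh x
  -- first moment identity
  have hinner_int : Integrable (fun u => ⟪u - x, s⟫ * gaussD d h u x) μ := by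
    apply my_integrable_of_bound
      (C := ‖s‖ * (Real.sqrt h * (2 * π * h) ^ (-(d : ℝ) / 2)))
    · have hc1 : Continuous fun u : Vec d => ⟪u - x, s⟫ :=
        (continuous_id.sub continuous_const).inner continuous_const
      exact hc1.mul (gaussD_continuous_u x)
    · intro u
      rw [Real.norm_eq_abs, abs_mul, abs_of_pos (gaussD_pos hh u x)]
      have h1 : |⟪u - x, s⟫| ≤ ‖u - x‖ * ‖s‖ := abs_real_inner_le_norm _ _
      have h2 : ‖u - x‖ * gaussD d h u x ≤ Real.sqrt h * (2 * π * h) ^ (-(d : ℝ) / 2) := by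
        rw [norm_sub_rev]; exact norm_smul_gaussD_le hh u x
      calc |⟪u - x, s⟫| * gaussD d h u x ≤ (‖u - x‖ * ‖s‖) * gaussD d h u x :=
            mul_le_mul_of_nonneg_right h1 (gaussD_pos hh u x).le
        _ = ‖s‖ * (‖u - x‖ * gaussD d h u x) := by ring
        _ ≤ _ := mul_le_mul_of_nonneg_left h2 (norm_nonneg s)
  have hmean : ∫ u, ⟪u - x, s⟫ * gaussD d h u x ∂μ = h * (ρ * ‖s‖ ^ 2) := by
    have hpt : ∀ u : Vec d, ⟪u - x, s⟫ * gaussD d h u x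
        = h * ⟪s, (gaussD d h u x / h) • (u - x)⟫ := by
      intro u
      rw [real_inner_smul_right, real_inner_comm]
      field_simp
    calc ∫ u, ⟪u - x, s⟫ * gaussD d h u x ∂μ
        = ∫ u, h * ⟪s, (gaussD d h u x / h) • (u - x)⟫ ∂μ := by
          congr 1; funext u; exact hpt u
      _ = h * ∫ u, ⟪s, (gaussD d h u x / h) • (u - x)⟫ ∂μ := integral_const_mul h _
      _ = h * ⟪s, w⟫ := by rw [integral_inner hvec_int s]
      _ = h * (ρ * ‖s‖ ^ 2) := by
          rw [hws, real_inner_smul_right, real_inner_self_eq_norm_sq]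
  -- shift identity
  have hshift : ∀ u : Vec d, gaussD d h u (x + h • s)
      = gaussD d h u x * Real.exp ⟪u - x, s⟫ * Real.exp (-(h * ‖s‖ ^ 2 / 2)) := by
    intro u
    rw [gaussD_shift hh,
      show ⟪u - x, s⟫ - h * ‖s‖ ^ 2 / 2 = ⟪u - x, s⟫ + -(h * ‖s‖ ^ 2 / 2) by ring,
      Real.exp_add, mul_assoc]
  have hIexp : Integrable (fun u => gaussD d h u x * Real.exp ⟪u - x, s⟫) μ := by
    apply my_integrable_of_bound
      (C := (2 * π * h) ^ (-(d : ℝ) / 2) * Real.exp (h * ‖s‖ ^ 2 / 2))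
    case hc =>
      have hc1 : Continuous fun u : Vec d => ⟪u - x, s⟫ :=
        (continuous_id.sub continuous_const).inner continuous_const
      exact (gaussD_continuous_u x).mul hc1.rexp
    case hb =>
      intro u
      have heq : gaussD d h u x * Real.exp ⟪u - x, s⟫
          = gaussD d h u (x + h • s) * Real.exp (h * ‖s‖ ^ 2 / 2) := by
        rw [hshift u, mul_assoc, mul_assoc, ← Real.exp_add]
        rw [show -(h * ‖s‖ ^ 2 / 2) + h * ‖s‖ ^ 2 / 2 = 0 by ring, Real.exp_zero, mul_one]
      rw [Real.norm_eq_abs, abs_of_pos (mul_pos (gaussD_pos hh u x) (exp_pos _)), heq]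
      exact mul_le_mul_of_nonneg_right (gaussD_le hh u (x + h • s)) (exp_pos _).le
  -- Jensen-type lower bound
  set b := h * ‖s‖ ^ 2 with hbdef
  have hlower : Real.exp b * ρ ≤ ∫ u, gaussD d h u x * Real.exp ⟪u - x, s⟫ ∂μ := by
    have hpt : ∀ u : Vec d,
        Real.exp b * (1 + (⟪u - x, s⟫ - b)) * gaussD d h u x
          ≤ gaussD d h u x * Real.exp ⟪u - x, s⟫ := by
      intro u
      have h1 : 1 + (⟪u - x, s⟫ - b) ≤ Real.exp (⟪u - x, s⟫ - b) := by
        have := Real.add_one_le_exp (⟪u - x, s⟫ - b); linarith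
      have h2 : Real.exp b * Real.exp (⟪u - x, s⟫ - b) = Real.exp ⟪u - x, s⟫ := by
        rw [← Real.exp_add]; congr 1; ring
      calc Real.exp b * (1 + (⟪u - x, s⟫ - b)) * gaussD d h u x
          ≤ Real.exp b * Real.exp (⟪u - x, s⟫ - b) * gaussD d h u x := by
            apply mul_le_mul_of_nonneg_right _ (gaussD_pos hh u x).le
            exact mul_le_mul_of_nonneg_left h1 (exp_pos b).le
        _ = gaussD d h u x * Real.exp ⟪u - x, s⟫ := by rw [h2]; ring
    have hint_lhs : Integrable
        (fun u => Real.exp b * (1 + (⟪u - x, s⟫ - b)) * gaussD d h u x) μ := by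
      have heq : (fun u => Real.exp b * (1 + (⟪u - x, s⟫ - b)) * gaussD d h u x)
          = fun u => (Real.exp b * (1 - b)) * gaussD d h u x
              + Real.exp b * (⟪u - x, s⟫ * gaussD d h u x) := by
        funext u; ring
      rw [heq]
      exact (hg_int.const_mul _).add (hinner_int.const_mul _)
    have hmono := integral_mono hint_lhs hIexp hpt
    have hcomp : ∫ u, Real.exp b * (1 + (⟪u - x, s⟫ - b)) * gaussD d h u x ∂μ
        = Real.exp b * ρ := by
      have heq : (fun u => Real.exp b * (1 + (⟪u - x, s⟫ - b)) * gaussD d h u x)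
          = fun u => (Real.exp b * (1 - b)) * gaussD d h u x
              + Real.exp b * (⟪u - x, s⟫ * gaussD d h u x) := by
        funext u; ring
      rw [heq, integral_add ((hg_int.const_mul _)) (hinner_int.const_mul _),
        integral_const_mul, integral_const_mul, hmean]
      have : ∫ u, gaussD d h u x ∂μ = ρ := rfl
      rw [this, hbdef]
      try ring
    rw [hcomp] at hmono
    exact hmono
  -- combine with the upper bound at the shifted point
  have hupper : ∫ u, gaussD d h u (x + h • s) ∂μ ≤ (2 * π * h) ^ (-(d : ℝ) / 2) :=
    convD_le hh (x + h • s)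
  have hshiftint : ∫ u, gaussD d h u (x + h • s) ∂μ
      = (∫ u, gaussD d h u x * Real.exp ⟪u - x, s⟫ ∂μ) * Real.exp (-(b / 2)) := by
    rw [← integral_mul_const]
    congr 1; funext u
    rw [hshift u]
  have hmain : Real.exp (b / 2) * ρ ≤ (2 * π * h) ^ (-(d : ℝ) / 2) := by
    have h1 : Real.exp b * ρ * Real.exp (-(b / 2))
        ≤ (∫ u, gaussD d h u x * Real.exp ⟪u - x, s⟫ ∂μ) * Real.exp (-(b / 2)) :=
      mul_le_mul_of_nonneg_right hlower (exp_pos _).le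
    rw [← hshiftint] at h1
    have h2 : Real.exp b * ρ * Real.exp (-(b / 2)) = Real.exp (b / 2) * ρ := by
      rw [mul_comm (Real.exp b) ρ, mul_assoc, ← Real.exp_add,
        show b + -(b / 2) = b / 2 by ring]
      ring
    rw [h2] at h1
    exact h1.trans hupper
  -- finish
  have hCpos : (0 : ℝ) < (2 * π * h) ^ ((d : ℝ) / 2) := rpow_pos_of_pos (by positivity) _
  have hCinv : (2 * π * h) ^ (-(d : ℝ) / 2) = ((2 * π * h) ^ ((d : ℝ) / 2))⁻¹ := by
    rw [neg_div, Real.rpow_neg (by positivity)]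
  have hexp_le : Real.exp (b / 2) ≤ 1 / ((2 * π * h) ^ ((d : ℝ) / 2) * ρ) := by
    rw [le_div_iff₀ (by positivity)]
    have := mul_le_mul_of_nonneg_right hmain hCpos.le
    rw [hCinv] at this
    calc Real.exp (b / 2) * ((2 * π * h) ^ ((d : ℝ) / 2) * ρ)
        = Real.exp (b / 2) * ρ * (2 * π * h) ^ ((d : ℝ) / 2) := by ring
      _ ≤ ((2 * π * h) ^ ((d : ℝ) / 2))⁻¹ * (2 * π * h) ^ ((d : ℝ) / 2) := this
      _ = 1 := inv_mul_cancel₀ hCpos.ne'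
  have hlog : b / 2 ≤ Real.log (1 / ((2 * π * h) ^ ((d : ℝ) / 2) * ρ)) := by
    have := Real.log_le_log (exp_pos _) hexp_le
    rwa [Real.log_exp] at this
  calc ‖s‖ ^ 2 = (2 / h) * (b / 2) := by rw [hbdef]; field_simp
    _ ≤ (2 / h) * Real.log (1 / ((2 * π * h) ^ ((d : ℝ) / 2) * ρ)) := by
        apply mul_le_mul_of_nonneg_left hlog (by positivity)
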